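/- Fix n > m ≥ 0 and let U be a nonempty open subset of some Euclidean space ℝ^d. Let ρ_n : (ℝ × U)^n → ⊕_{u∈U} ℝ be the map (r_1,u_1,…,r_n,u_n) ↦ Σ_i r_i [u_i], and let F_{≤m}(U) be the set of elements of ⊕_{u∈U} ℝ whose support has at most m points. Then ρ_n⁻¹(F_{≤m}(U)) is closed in (ℝ × U)^n. -/

import Mathlib

open Set Topology

theorem stmt15 {d : ℕ} (U : Set (Fin d → ℝ)) (hU : IsOpen U) (hne : U.Nonempty)
    {n m : ℕ} (hnm : m < n) :
    IsClosed {f : Fin n → ℝ × U |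
      (∑ i : Fin n, Finsupp.single (f i).2 (f i).1 : U →₀ ℝ).support.card ≤ m} := by
  classical
  have hn : 0 < n := lt_of_le_of_lt (Nat.zero_le m) hnm
  have hne' : Nonempty (Fin n) := ⟨⟨0, hn⟩⟩
  -- coefficient formula
  have coeff : ∀ (f : Fin n → ℝ × U) (v : U),
      (∑ i : Fin n, Finsupp.single (f i).2 (f i).1 : U →₀ ℝ) v
        = ∑ i ∈ Finset.univ.filter (fun i => (f i).2 = v), (f i).1 := by
    intro f v
    rw [Finset.sum_apply']
    simp [Finsupp.single_apply, Finset.sum_filter]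
  have key : {f : Fin n → ℝ × U |
      (∑ i : Fin n, Finsupp.single (f i).2 (f i).1 : U →₀ ℝ).support.card ≤ m}
    = ⋃ (p : (Fin n → Fin n) × Finset (Fin n))
        (_ : ((Finset.univ.image p.1) \ p.2).card ≤ m),
        {f : Fin n → ℝ × U |
          (∀ i j, p.1 i = p.1 j → (f i).2 = (f j).2) ∧
          (∀ k ∈ p.2, ∑ i ∈ Finset.univ.filter (fun i => p.1 i = k), (f i).1 = 0)} := by
    ext f
    simp only [Set.mem_setOf_eq, Set.mem_iUnion]
    constructor
    · intro hcard
      -- construct σ and Z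
      set σ : Fin n → Fin n := fun i =>
        (Finset.univ.filter (fun j => (f j).2 = (f i).2)).min'
          ⟨i, by simp⟩ with hσ
      have hmem : ∀ i, (f (σ i)).2 = (f i).2 := by
        intro i
        have := (Finset.univ.filter (fun j => (f j).2 = (f i).2)).min'_mem
          ⟨i, by simp⟩
        simpa using this
      have heq : ∀ i j, (f i).2 = (f j).2 → σ i = σ j := by
        intro i j h
        simp only [hσ, h]
      have hiff : ∀ i j, σ i = σ j ↔ (f i).2 = (f j).2 := by
        intro i j
        refine ⟨fun h => ?_, heq i j⟩
        rw [← hmem i, ← hmem j, h]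
      set Z : Finset (Fin n) := Finset.univ.filter
        (fun k => ∑ i ∈ Finset.univ.filter (fun i => σ i = k), (f i).1 = 0) with hZ
      have hfix : ∀ k ∈ Finset.univ.image σ, σ k = k := by
        intro k hk
        obtain ⟨i, -, rfl⟩ := Finset.mem_image.mp hk
        exact heq _ _ (hmem i)
      refine ⟨⟨σ, Z⟩, ?_, ?_, ?_⟩
      · -- card bound
        refine le_trans (Finset.card_le_card_of_injOn (fun k => (f k).2)
          ?_ ?_) hcard
        · intro k hk
          rw [Finset.mem_coe, Finset.mem_sdiff] at hk
          rw [Finset.mem_coe, Finsupp.mem_support_iff, coeff]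
          have hset : Finset.univ.filter (fun i => (f i).2 = (f k).2)
              = Finset.univ.filter (fun i => σ i = k) := by
            ext i
            simp only [Finset.mem_filter, Finset.mem_univ, true_and]
            constructor
            · intro h; rw [← hfix k hk.1]; exact heq i k h
            · intro h; rw [← h]; exact (hmem i).symm
          rw [hset]
          intro h0
          exact hk.2 (by simp [hZ, h0])
        · intro k hk k' hk' h
          rw [Finset.mem_coe, Finset.mem_sdiff] at hk hk'
          rw [← hfix k hk.1, ← hfix k' hk'.1]
          exact heq k k' h
      · intro i j h
        rw [← hmem i, ← hmem j]
        exact congrArg (fun k => (f k).2) (h : σ i = σ j)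
      · intro k hk
        simpa [hZ] using hk
    · rintro ⟨⟨σ, Z⟩, hcard, h1, h2⟩
      -- surjection from image σ \ Z onto support
      refine le_trans (Finset.card_le_card_of_surjOn
        (fun k => (f (Function.invFun σ k)).2) ?_) hcard
      intro v hv
      rw [Finset.mem_coe, Finsupp.mem_support_iff, coeff] at hv
      set A := Finset.univ.filter (fun i => (f i).2 = v) with hA
      have hsum : ∑ k ∈ A.image σ, ∑ i ∈ A.filter (fun i => σ i = k), (f i).1
          = ∑ i ∈ A, (f i).1 :=
        Finset.sum_fiberwise_of_maps_to (fun i hi => Finset.mem_image_of_mem σ hi) _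
      have hAfib : ∀ k ∈ A.image σ,
          A.filter (fun i => σ i = k) = Finset.univ.filter (fun i => σ i = k) := by
        intro k hk
        obtain ⟨j, hj, rfl⟩ := Finset.mem_image.mp hk
        rw [hA, Finset.mem_filter] at hj
        ext i
        simp only [hA, Finset.mem_filter, Finset.mem_univ, true_and, and_comm]
        constructor
        · rintro ⟨hi, -⟩; exact hi
        · intro hi; exact ⟨hi, (h1 i j hi).trans hj.2⟩
      obtain ⟨k, hk, hk0⟩ : ∃ k ∈ A.image σ,
          ∑ i ∈ A.filter (fun i => σ i = k), (f i).1 ≠ 0 := by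
        by_contra h
        push_neg at h
        exact hv (by rw [← hsum, Finset.sum_eq_zero h])
      have hkZ : k ∉ Z := by
        intro hkZ
        rw [hAfib k hk] at hk0
        exact hk0 (h2 k hkZ)
      refine ⟨k, ?_, ?_⟩
      · rw [Finset.mem_coe, Finset.mem_sdiff]
        obtain ⟨j, -, rfl⟩ := Finset.mem_image.mp hk
        exact ⟨Finset.mem_image_of_mem σ (Finset.mem_univ j), hkZ⟩
      · obtain ⟨j, hj, rfl⟩ := Finset.mem_image.mp hk
        rw [hA, Finset.mem_filter] at hj
        have : σ (Function.invFun σ (σ j)) = σ j :=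
          Function.invFun_eq ⟨j, rfl⟩
        exact (h1 _ j this).trans hj.2
  rw [key]
  refine isClosed_iUnion_of_finite fun p => isClosed_iUnion_of_finite fun _ => ?_
  have : {f : Fin n → ℝ × U |
      (∀ i j, p.1 i = p.1 j → (f i).2 = (f j).2) ∧
      (∀ k ∈ p.2, ∑ i ∈ Finset.univ.filter (fun i => p.1 i = k), (f i).1 = 0)}
    = (⋂ i, ⋂ j, {f : Fin n → ℝ × U | p.1 i = p.1 j → (f i).2 = (f j).2}) ∩
      (⋂ k ∈ p.2, {f : Fin n → ℝ × U |
        ∑ i ∈ Finset.univ.filter (fun i => p.1 i = k), (f i).1 = 0}) := by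
    ext f; simp [Set.mem_iInter, forall_and]
  rw [this]
  refine IsClosed.inter ?_ ?_
  · refine isClosed_iInter fun i => isClosed_iInter fun j => ?_
    by_cases h : p.1 i = p.1 j
    · simp only [h, forall_const]
      have : {f : Fin n → ℝ × U | (f i).2 = (f j).2}
          = {f : Fin n → ℝ × U | ((f i).2 : Fin d → ℝ) = ((f j).2 : Fin d → ℝ)} := by
        ext f; simp [Subtype.ext_iff]
      rw [this]
      exact isClosed_eq
        (continuous_subtype_val.comp (continuous_snd.comp (continuous_apply i)))
        (continuous_subtype_val.comp (continuous_snd.comp (continuous_apply j)))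
    · have : {f : Fin n → ℝ × U | p.1 i = p.1 j → (f i).2 = (f j).2} = Set.univ := by
        ext f; simp [h]
      rw [this]; exact isClosed_univ
  · refine isClosed_biInter fun k _ => ?_
    exact isClosed_eq
      (continuous_finset_sum _ fun i _ => continuous_fst.comp (continuous_apply i))
      continuous_const
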